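/- Let A be a reduced commutative ring and f ∈ A a nonzerodivisor. Then the canonical localization map A[t][f⁻¹] → A[t][(ft)⁻¹] (which is injective, since t is a nonzerodivisor in A[t][f⁻¹]) maps MO(A[t], f) bijectively onto MO(A[t], ft); i.e., the functorial inclusion MO(A[t], f) ⊆ MO(A[t], ft) is an equality. -/

import Mathlib

open Polynomial


/-- `MO(A,f)`: the subset of the localization `L` (with localization map `ι : A →+* L`)
consisting of those `x` with `ι f * x = ι a` for some `a` in the radical of `(f)`. -/
def MOset {A L : Type*} [CommRing A] [CommRing L] (ι : A →+* L) (f : A) : Set L :=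
  {x | ∃ a ∈ (Ideal.span {f}).radical, ι a = ι f * x}

/-- for `A` reduced and `f ∈ A` a nonzerodivisor, the canonical map
`A[t][f⁻¹] → A[t][(f·t)⁻¹]` (the unique `ψ` compatible with the localization maps from
`A[t]`) is injective and maps `MO(A[t], f)` bijectively onto `MO(A[t], f·t)`. -/

-- X is a nonzerodivisor in B[X]
lemma X_nzd {B : Type*} [CommRing B] : (X : B[X]) ∈ nonZeroDivisors (B[X]) := by
  rw [mem_nonZeroDivisors_iff_right]
  intro p hp
  ext i
  have := congrArg (fun q => Polynomial.coeff q (i+1)) hp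
  simpa [coeff_X_mul, mul_comm] using this

lemma Cf_nzd {A : Type*} [CommRing A] {f : A} (hf : f ∈ nonZeroDivisors A) :
    (C f : A[X]) ∈ nonZeroDivisors (A[X]) := by
  rw [mem_nonZeroDivisors_iff_right]
  intro p hp
  ext i
  have := congrArg (fun q => Polynomial.coeff q i) hp
  simp only [coeff_C_mul, mul_comm, coeff_zero] at this
  simpa using (mem_nonZeroDivisors_iff_right.mp hf) _ (by simpa [mul_comm] using this)

theorem stmt8 {A : Type*} [CommRing A] [IsReduced A] (f : A) (hf : f ∈ nonZeroDivisors A)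
    (ψ : Localization.Away (Polynomial.C f : Polynomial A) →+*
      Localization.Away (Polynomial.C f * Polynomial.X : Polynomial A))
    (hψ : ψ.comp (algebraMap (Polynomial A) (Localization.Away (Polynomial.C f))) =
      algebraMap (Polynomial A) (Localization.Away (Polynomial.C f * Polynomial.X))) :
    Function.Injective ψ ∧
      ψ '' MOset (algebraMap (Polynomial A) (Localization.Away (Polynomial.C f)))
          (Polynomial.C f) =
        MOset (algebraMap (Polynomial A)
            (Localization.Away (Polynomial.C f * Polynomial.X)))
          (Polynomial.C f * Polynomial.X) := by
  set R := Polynomial A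
  set Lg := Localization.Away (C f : R)
  set Lh := Localization.Away (C f * X : R)
  set ιg := algebraMap R Lg with hιg
  set ιh := algebraMap R Lh with hιh
  have hcomp : ∀ p : R, ψ (ιg p) = ιh p := fun p => RingHom.congr_fun hψ p
  have hXnzd : (X : R) ∈ nonZeroDivisors R := X_nzd
  have uh : IsUnit (ιh (C f * X)) :=
    IsLocalization.map_units Lh (⟨C f * X, Submonoid.mem_powers _⟩ :
      Submonoid.powers (C f * X : R))
  have uh' : IsUnit (ιh (C f) * ιh (X : R)) := by rwa [← map_mul]
  have ug : IsUnit (ιh (C f)) := isUnit_of_mul_isUnit_left uh'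
  have uX : IsUnit (ιh (X : R)) := isUnit_of_mul_isUnit_right uh'
  -- radical of span {C f * X}
  have rad_h : (Ideal.span {(C f * X : R)}).radical =
      (Ideal.span {(C f : R)}).radical ⊓ (Ideal.span {(X : R)}).radical := by
    rw [← Ideal.span_singleton_mul_span_singleton, Ideal.radical_mul]
  have hinj : Function.Injective ψ := by
    rw [injective_iff_map_eq_zero]
    intro x hx
    obtain ⟨⟨r, s⟩, rfl⟩ := IsLocalization.mk'_surjective (Submonoid.powers (C f : R)) x
    have hspec := IsLocalization.mk'_spec Lg r s
    have h1 : ιh r = 0 := by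
      have := congrArg ψ hspec
      rw [map_mul, hx, zero_mul, hcomp] at this
      exact this.symm
    obtain ⟨⟨m, k, rfl⟩, hm⟩ :=
      (IsLocalization.map_eq_zero_iff (Submonoid.powers (C f * X : R)) Lh r).mp h1
    have hm' : (C f : R) ^ k * r * (X : R) ^ k = 0 := by
      rw [← hm]; ring
    have hm2 : (C f : R) ^ k * r = 0 := (mem_nonZeroDivisors_iff_right.mp (pow_mem hXnzd k)) _ hm'
    have h2 : ιg r = 0 :=
      (IsLocalization.map_eq_zero_iff (Submonoid.powers (C f : R)) Lg r).mpr
        ⟨⟨(C f) ^ k, k, rfl⟩, hm2⟩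
    have := hspec
    rw [h2] at this
    exact ((IsLocalization.map_units Lg s).mul_left_eq_zero).mp this
  refine ⟨hinj, Set.Subset.antisymm ?_ ?_⟩
  · rintro _ ⟨x, ⟨a, ha, hax⟩, rfl⟩
    refine ⟨X * a, ?_, ?_⟩
    · rw [rad_h]
      exact ⟨Ideal.mul_mem_left _ _ ha,
        Ideal.mul_mem_right _ _ (Ideal.le_radical (Ideal.mem_span_singleton_self _))⟩
    · have := congrArg ψ hax
      rw [map_mul, hcomp, hcomp] at this
      rw [map_mul, map_mul, this]
      ring
  · rintro y ⟨b, hb, hby⟩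
    rw [rad_h] at hb
    -- X divides b
    obtain ⟨k, hk⟩ := hb.2
    have hb0 : Polynomial.eval 0 b = 0 := by
      have := Ideal.mem_span_singleton.mp hk
      rw [X_dvd_iff, coeff_zero_eq_eval_zero, eval_pow] at this
      exact IsReduced.eq_zero _ ⟨k, this⟩
    obtain ⟨c, rfl⟩ : (X : R) ∣ b := X_dvd_iff.mpr (by rwa [coeff_zero_eq_eval_zero])
    -- c ∈ radical (span {C f})
    obtain ⟨n, hn⟩ := hb.1
    have hcrad : c ∈ (Ideal.span {(C f : R)}).radical := by
      obtain ⟨q, hq⟩ := Ideal.mem_span_singleton.mp hn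
      refine ⟨n, ?_⟩
      set π := Ideal.Quotient.mk (Ideal.span {f} : Ideal A) with hπ
      set φ := Polynomial.mapRingHom π with hφ
      have hφf : φ (C f) = 0 := by
        simp [hφ, hπ, Ideal.Quotient.eq_zero_iff_mem, Ideal.mem_span_singleton_self]
      have h1 : (φ (X * c)) ^ n = 0 := by
        rw [← map_pow, hq, map_mul, hφf, zero_mul]
      have h2 : (φ c) ^ n * (X : Polynomial (A ⧸ Ideal.span {f})) ^ n = 0 := by
        rw [map_mul] at h1
        rw [← h1, mul_pow]
        simp [hφ]
        ring
      have h3 : (φ c) ^ n = 0 := (mem_nonZeroDivisors_iff_right.mp (pow_mem (X_nzd) n)) _ h2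
      have h4 : c ^ n ∈ RingHom.ker φ := by
        rw [RingHom.mem_ker, map_pow, h3]
      rwa [hφ, Polynomial.ker_mapRingHom, hπ, Ideal.mk_ker, Ideal.map_span,
        Set.image_singleton] at h4
    -- construct the preimage
    set x := IsLocalization.mk' Lg c (⟨C f, Submonoid.mem_powers _⟩ :
      Submonoid.powers (C f : R)) with hx
    have hspec := IsLocalization.mk'_spec Lg c
      (⟨C f, Submonoid.mem_powers _⟩ : Submonoid.powers (C f : R))
    rw [← hιg] at hspec
    rw [← hx] at hspec
    refine ⟨x, ⟨c, hcrad, by rw [← hspec]; ring⟩, ?_⟩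
    -- ψ x = y
    have e1 : ιh (C f) * ψ x = ιh c := by
      have h := congrArg ψ hspec
      rw [map_mul, hcomp, hcomp] at h
      rw [mul_comm]; exact h
    have e2 : ιh (X : R) * (ιh (C f) * y) = ιh (X : R) * ιh c := by
      rw [map_mul, map_mul] at hby
      rw [hby]; ring
    exact ug.mul_left_cancel (e1.trans (uX.mul_left_cancel e2).symm)
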